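/- The function k ↦ I₁(k)/I₂(k)³ is strictly decreasing on (0,1), where I₁(k) = (4/3)·√(2/(1+k²))·(E(k) − ((1−k²)(1+3k²)/(4(1+k²)))·K(k)) and I₂(k) = 2·√(2/(1+k²))·(E(k) − ((1−k²)/2)·K(k)). -/

import Mathlib

open Real Set intervalIntegral

/-- Complete elliptic integral of the first kind. -/
noncomputable def ellK (k : ℝ) : ℝ :=
  ∫ x in (0 : ℝ)..1, 1 / (Real.sqrt (1 - x ^ 2) * Real.sqrt (1 - k ^ 2 * x ^ 2))

/-- Complete elliptic integral of the second kind. -/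
noncomputable def ellE (k : ℝ) : ℝ :=
  ∫ x in (0 : ℝ)..1, Real.sqrt (1 - k ^ 2 * x ^ 2) / Real.sqrt (1 - x ^ 2)

noncomputable def I₁ (k : ℝ) : ℝ :=
  4 / 3 * Real.sqrt (2 / (1 + k ^ 2)) *
    (ellE k - (1 - k ^ 2) * (1 + 3 * k ^ 2) / (4 * (1 + k ^ 2)) * ellK k)

noncomputable def I₂ (k : ℝ) : ℝ :=
  2 * Real.sqrt (2 / (1 + k ^ 2)) * (ellE k - (1 - k ^ 2) / 2 * ellK k)


open MeasureTheory
open scoped Interval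

lemma ae_ne_one : ∀ᵐ t : ℝ, t ≠ (1:ℝ) := by
  rw [MeasureTheory.ae_iff]
  have : {t : ℝ | ¬ t ≠ 1} = {(1:ℝ)} := by ext t; simp
  rw [this]; simp

lemma uIoc01 : Ι (0:ℝ) 1 = Ioc (0:ℝ) 1 := uIoc_of_le (by norm_num)

lemma rpow_neg_half_eq {x : ℝ} (hx : 0 ≤ x) : x ^ (-(1/2) : ℝ) = (Real.sqrt x)⁻¹ := by
  rw [Real.rpow_neg hx, Real.sqrt_eq_rpow]

lemma base_integrable : IntervalIntegrable (fun t : ℝ => (1 - t) ^ (-(1/2) : ℝ)) volume 0 1 := by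
  have h := intervalIntegral.intervalIntegrable_rpow' (a := (0:ℝ)) (b := 1) (r := -(1/2)) (by norm_num)
  have h2 := h.comp_sub_left 1
  simpa using h2.symm

/-- domination criterion -/
lemma integrable_of_bound (f : ℝ → ℝ)
    (hm : AEStronglyMeasurable f (volume.restrict (Ι (0:ℝ) 1))) (C : ℝ)
    (h : ∀ t ∈ Ioo (0:ℝ) 1, |f t| ≤ C * (1 - t) ^ (-(1/2) : ℝ)) :
    IntervalIntegrable f volume 0 1 := by
  apply (base_integrable.const_mul C).mono_fun' hm
  filter_upwards [ae_restrict_mem measurableSet_uIoc, ae_restrict_of_ae ae_ne_one] with t ht hne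
  rw [uIoc01] at ht
  have ht' : t ∈ Ioo (0:ℝ) 1 := ⟨ht.1, lt_of_le_of_ne ht.2 hne⟩
  exact h t ht'

noncomputable def AK (k t : ℝ) : ℝ := 1 / (Real.sqrt (1 - t ^ 2) * Real.sqrt (1 - k ^ 2 * t ^ 2))
noncomputable def BE (k t : ℝ) : ℝ := Real.sqrt (1 - k ^ 2 * t ^ 2) / Real.sqrt (1 - t ^ 2)
noncomputable def CC (k t : ℝ) : ℝ := Real.sqrt (1 - t ^ 2) / Real.sqrt (1 - k ^ 2 * t ^ 2)
noncomputable def W (k t : ℝ) : ℝ :=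
  t ^ 2 / (Real.sqrt (1 - t ^ 2) * ((1 - k ^ 2 * t ^ 2) * Real.sqrt (1 - k ^ 2 * t ^ 2)))


section meas
variable (k : ℝ)
lemma m_sq : Measurable fun t : ℝ => t ^ 2 := measurable_id.pow_const 2
lemma m_a : Measurable fun t : ℝ => Real.sqrt (1 - t ^ 2) := (measurable_const.sub (m_sq)).sqrt
lemma m_b : Measurable fun t : ℝ => Real.sqrt (1 - k ^ 2 * t ^ 2) :=
  (measurable_const.sub ((m_sq).const_mul _)).sqrt
lemma measAK : Measurable (AK k) := measurable_const.div ((m_a).mul (m_b k))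
lemma measBE : Measurable (BE k) := (m_b k).div (m_a)
lemma measCC : Measurable (CC k) := (m_a).div (m_b k)
lemma measW : Measurable (W k) :=
  (m_sq).div ((m_a).mul ((measurable_const.sub ((m_sq).const_mul _)).mul (m_b k)))
end meas

section facts
variable {k t : ℝ} (hk : k ^ 2 < 1) (ht : t ∈ Ioo (0:ℝ) 1)

lemma t2lt1 (ht : t ∈ Ioo (0:ℝ) 1) : t ^ 2 < 1 := by nlinarith [ht.1, ht.2]

lemma kt_pos (hk : k ^ 2 < 1) (ht : t ∈ Ioo (0:ℝ) 1) : 0 < 1 - k ^ 2 * t ^ 2 := by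
  nlinarith [sq_nonneg k, t2lt1 ht]

lemma hs1 (ht : t ∈ Ioo (0:ℝ) 1) : Real.sqrt (1 - t) ≤ Real.sqrt (1 - t ^ 2) :=
  Real.sqrt_le_sqrt (by nlinarith [ht.1, ht.2])

lemma hs2 (hk : k ^ 2 < 1) (ht : t ∈ Ioo (0:ℝ) 1) :
    Real.sqrt (1 - k ^ 2) ≤ Real.sqrt (1 - k ^ 2 * t ^ 2) :=
  Real.sqrt_le_sqrt (by nlinarith [sq_nonneg k, t2lt1 ht])

lemma hp1 (ht : t ∈ Ioo (0:ℝ) 1) : 0 < Real.sqrt (1 - t) := Real.sqrt_pos.2 (by linarith [ht.2])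

lemma hp2 (hk : k ^ 2 < 1) : 0 < Real.sqrt (1 - k ^ 2) := Real.sqrt_pos.2 (by linarith)

lemma ha_pos (ht : t ∈ Ioo (0:ℝ) 1) : 0 < Real.sqrt (1 - t ^ 2) :=
  Real.sqrt_pos.2 (by nlinarith [t2lt1 ht])

lemma hb_pos (hk : k ^ 2 < 1) (ht : t ∈ Ioo (0:ℝ) 1) : 0 < Real.sqrt (1 - k ^ 2 * t ^ 2) :=
  Real.sqrt_pos.2 (kt_pos hk ht)

end facts

lemma AK_integrable {k : ℝ} (hk : k ^ 2 < 1) : IntervalIntegrable (AK k) volume 0 1 := by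
  apply integrable_of_bound _ (measAK k).aestronglyMeasurable (Real.sqrt (1 - k ^ 2))⁻¹
  intro t ht
  have h1t : (0:ℝ) < 1 - t := by linarith [ht.2]
  rw [rpow_neg_half_eq h1t.le]
  have hnn : 0 ≤ AK k t := by unfold AK; positivity
  rw [abs_of_nonneg hnn]
  have key : AK k t ≤ 1 / (Real.sqrt (1 - t) * Real.sqrt (1 - k ^ 2)) := by
    apply div_le_div₀ zero_le_one le_rfl (mul_pos (hp1 ht) (hp2 hk))
    exact mul_le_mul (hs1 ht) (hs2 hk ht) (hp2 hk).le (ha_pos ht).le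
  calc AK k t ≤ 1 / (Real.sqrt (1 - t) * Real.sqrt (1 - k ^ 2)) := key
    _ = (Real.sqrt (1 - k ^ 2))⁻¹ * (Real.sqrt (1 - t))⁻¹ := by
        rw [one_div, mul_inv, mul_comm]

lemma BE_integrable {k : ℝ} (hk : k ^ 2 < 1) : IntervalIntegrable (BE k) volume 0 1 := by
  apply integrable_of_bound _ (measBE k).aestronglyMeasurable 1
  intro t ht
  have h1t : (0:ℝ) < 1 - t := by linarith [ht.2]
  rw [rpow_neg_half_eq h1t.le, one_mul]
  have hnn : 0 ≤ BE k t := by unfold BE; positivity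
  rw [abs_of_nonneg hnn]
  have hb1 : Real.sqrt (1 - k ^ 2 * t ^ 2) ≤ 1 :=
    Real.sqrt_le_one.2 (by nlinarith [sq_nonneg k, sq_nonneg t, ht.1])
  calc BE k t ≤ 1 / Real.sqrt (1 - t) :=
        div_le_div₀ zero_le_one hb1 (hp1 ht) (hs1 ht)
    _ = (Real.sqrt (1 - t))⁻¹ := one_div _

lemma CC_integrable {k : ℝ} (hk : k ^ 2 < 1) : IntervalIntegrable (CC k) volume 0 1 := by
  apply integrable_of_bound _ (measCC k).aestronglyMeasurable (Real.sqrt (1 - k ^ 2))⁻¹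
  intro t ht
  have h1t : (0:ℝ) < 1 - t := by linarith [ht.2]
  rw [rpow_neg_half_eq h1t.le]
  have hnn : 0 ≤ CC k t := by unfold CC; positivity
  rw [abs_of_nonneg hnn]
  have ha1 : Real.sqrt (1 - t ^ 2) ≤ 1 := Real.sqrt_le_one.2 (by nlinarith [ht.1, ht.2])
  have h1 : CC k t ≤ (Real.sqrt (1 - k ^ 2))⁻¹ := by
    rw [← one_div]
    exact div_le_div₀ zero_le_one ha1 (hp2 hk) (hs2 hk ht)
  have h2 : (1:ℝ) ≤ (Real.sqrt (1 - t))⁻¹ :=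
    (one_le_inv₀ (hp1 ht)).2 (Real.sqrt_le_one.2 (by linarith [ht.1]))
  calc CC k t ≤ (Real.sqrt (1 - k ^ 2))⁻¹ := h1
    _ ≤ (Real.sqrt (1 - k ^ 2))⁻¹ * (Real.sqrt (1 - t))⁻¹ :=
        le_mul_of_one_le_right (by positivity) h2

lemma W_integrable {k : ℝ} (hk : k ^ 2 < 1) : IntervalIntegrable (W k) volume 0 1 := by
  apply integrable_of_bound _ (measW k).aestronglyMeasurable
    ((1 - k ^ 2) * Real.sqrt (1 - k ^ 2))⁻¹
  intro t ht
  have h1t : (0:ℝ) < 1 - t := by linarith [ht.2]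
  rw [rpow_neg_half_eq h1t.le]
  have hnn : 0 ≤ W k t := by
    unfold W
    exact div_nonneg (sq_nonneg t) (mul_nonneg (Real.sqrt_nonneg _)
      (mul_nonneg (kt_pos hk ht).le (Real.sqrt_nonneg _)))
  rw [abs_of_nonneg hnn]
  have hd : Real.sqrt (1 - t) * ((1 - k ^ 2) * Real.sqrt (1 - k ^ 2)) ≤
      Real.sqrt (1 - t ^ 2) * ((1 - k ^ 2 * t ^ 2) * Real.sqrt (1 - k ^ 2 * t ^ 2)) := by
    apply mul_le_mul (hs1 ht) _ (mul_nonneg (by nlinarith) (Real.sqrt_nonneg _)) (ha_pos ht).le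
    apply mul_le_mul (by nlinarith [sq_nonneg k, t2lt1 ht]) (hs2 hk ht) (hp2 hk).le
      (kt_pos hk ht).le
  have ht2 : t ^ 2 ≤ 1 := (t2lt1 ht).le
  calc W k t ≤ 1 / (Real.sqrt (1 - t) * ((1 - k ^ 2) * Real.sqrt (1 - k ^ 2))) :=
        div_le_div₀ zero_le_one ht2 (mul_pos (hp1 ht) (mul_pos (by nlinarith) (hp2 hk))) hd
    _ = ((1 - k ^ 2) * Real.sqrt (1 - k ^ 2))⁻¹ * (Real.sqrt (1 - t))⁻¹ := by
        rw [one_div, mul_inv, mul_comm]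

lemma ellK_eq (k : ℝ) : ellK k = ∫ t in (0:ℝ)..1, AK k t := rfl
lemma ellE_eq (k : ℝ) : ellE k = ∫ t in (0:ℝ)..1, BE k t := rfl

lemma ellK_pos {k : ℝ} (hk : k ^ 2 < 1) : 0 < ellK k := by
  rw [ellK_eq]
  apply intervalIntegral_pos_of_pos_on (AK_integrable hk) _ one_pos
  intro t ht
  unfold AK
  have := ha_pos ht; have := hb_pos hk ht
  positivity

lemma ellE_pos {k : ℝ} (hk : k ^ 2 < 1) : 0 < ellE k := by
  rw [ellE_eq]
  apply intervalIntegral_pos_of_pos_on (BE_integrable hk) _ one_pos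
  intro t ht
  unfold BE
  have := ha_pos ht; have := hb_pos hk ht
  positivity

lemma intCC_pos {k : ℝ} (hk : k ^ 2 < 1) : 0 < ∫ t in (0:ℝ)..1, CC k t := by
  apply intervalIntegral_pos_of_pos_on (CC_integrable hk) _ one_pos
  intro t ht
  unfold CC
  have := ha_pos ht; have := hb_pos hk ht
  positivity

/-- Key identity : E - (1-k²)K = k² ∫ CC -/
lemma ellE_sub_ellK {k : ℝ} (hk : k ^ 2 < 1) :
    ellE k - (1 - k ^ 2) * ellK k = k ^ 2 * ∫ t in (0:ℝ)..1, CC k t := by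
  rw [ellE_eq, ellK_eq, ← intervalIntegral.integral_const_mul,
    ← intervalIntegral.integral_const_mul,
    ← intervalIntegral.integral_sub (BE_integrable hk) ((AK_integrable hk).const_mul _)]
  apply intervalIntegral.integral_congr_ae
  filter_upwards [ae_ne_one] with t hne htm
  rw [uIoc01] at htm
  have ht : t ∈ Ioo (0:ℝ) 1 := ⟨htm.1, lt_of_le_of_ne htm.2 hne⟩
  have ha0 := (ha_pos ht).ne'
  have hb0 := (hb_pos hk ht).ne'
  have ha2 : Real.sqrt (1 - t ^ 2) ^ 2 = 1 - t ^ 2 := Real.sq_sqrt (by nlinarith [t2lt1 ht])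
  have hb2 : Real.sqrt (1 - k ^ 2 * t ^ 2) ^ 2 = 1 - k ^ 2 * t ^ 2 :=
    Real.sq_sqrt (kt_pos hk ht).le
  unfold BE AK CC
  field_simp
  linear_combination hb2 - k ^ 2 * ha2

lemma intCW_eq {k : ℝ} (hk : k ^ 2 < 1) :
    ∫ t in (0:ℝ)..1, (CC k t - (1 - k ^ 2) * W k t) = 0 := by
  set u : ℝ → ℝ := fun t => t * Real.sqrt (1 - t ^ 2) / Real.sqrt (1 - k ^ 2 * t ^ 2) with hu
  have h01 : ∀ t ∈ Icc (0:ℝ) 1, (0:ℝ) < 1 - k ^ 2 * t ^ 2 := by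
    intro t ht
    have ht2 : t ^ 2 ≤ 1 := by nlinarith [ht.1, ht.2]
    nlinarith [sq_nonneg k, ht2]
  have hcont : ContinuousOn u (Icc 0 1) := by
    apply ContinuousOn.div
    · exact (continuous_id.mul ((continuous_const.sub (continuous_pow 2)).sqrt)).continuousOn
    · exact ((continuous_const.sub (continuous_const.mul (continuous_pow 2))).sqrt).continuousOn
    · intro t ht; exact (Real.sqrt_pos.2 (h01 t ht)).ne'
  have hderiv : ∀ t ∈ Ioo (0:ℝ) 1, HasDerivAt u (CC k t - (1 - k ^ 2) * W k t) t := by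
    intro t ht
    have hb0 := hb_pos hk ht
    have ha0 := ha_pos ht
    have ha2 : Real.sqrt (1 - t ^ 2) ^ 2 = 1 - t ^ 2 := Real.sq_sqrt (by nlinarith [t2lt1 ht])
    have hb2 : Real.sqrt (1 - k ^ 2 * t ^ 2) ^ 2 = 1 - k ^ 2 * t ^ 2 :=
      Real.sq_sqrt (kt_pos hk ht).le
    have s1 : HasDerivAt (fun x : ℝ => 1 - x ^ 2) (-(2 * t)) t := by
      simpa using (hasDerivAt_pow 2 t).const_sub 1
    have s2 : HasDerivAt (fun x : ℝ => 1 - k ^ 2 * x ^ 2) (-(k ^ 2 * (2 * t))) t := by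
      have := ((hasDerivAt_pow 2 t).const_mul (k ^ 2)).const_sub 1
      simpa [mul_comm, mul_assoc] using this
    have s1' := s1.sqrt (show (1:ℝ) - t ^ 2 ≠ 0 by nlinarith [t2lt1 ht])
    have s2' := s2.sqrt (show (1:ℝ) - k ^ 2 * t ^ 2 ≠ 0 from (kt_pos hk ht).ne')
    have hn := (hasDerivAt_id t).mul s1'
    have huu := hn.div s2' hb0.ne'
    refine huu.congr_deriv (Eq.symm ?_)
    unfold CC W
    simp only [Pi.mul_apply, id]
    have hkt := (kt_pos hk ht).ne'
    generalize Real.sqrt (1 - t ^ 2) = A at *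
    generalize Real.sqrt (1 - k ^ 2 * t ^ 2) = B at *
    field_simp [ha0.ne', hb0.ne', hkt]
    linear_combination k ^ 2 * t ^ 2 * (1 - t ^ 2) * hb2 - (1 - k ^ 2 * t ^ 2) * k ^ 2 * t ^ 2 * ha2
  have hint : IntervalIntegrable (fun t => CC k t - (1 - k ^ 2) * W k t) volume 0 1 :=
    (CC_integrable hk).sub ((W_integrable hk).const_mul _)
  rw [intervalIntegral.integral_eq_sub_of_hasDerivAt_of_le (by norm_num) hcont hderiv hint]
  have hu1 : u 1 = 0 := by simp [hu]
  have hu0 : u 0 = 0 := by simp [hu]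
  rw [hu1, hu0, sub_zero]

lemma intW_val {k : ℝ} (hk : k ^ 2 < 1) :
    (1 - k ^ 2) * ∫ t in (0:ℝ)..1, W k t = ∫ t in (0:ℝ)..1, CC k t := by
  have h := intCW_eq hk
  rw [intervalIntegral.integral_sub (CC_integrable hk) ((W_integrable hk).const_mul _),
    intervalIntegral.integral_const_mul] at h
  linarith

lemma ball_abs {k x : ℝ} (hk : k ∈ Ioo (0:ℝ) 1) (hx : x ∈ Metric.ball k ((1 - k) / 2)) :
    |x| < (1 + k) / 2 := by
  rw [Metric.mem_ball, Real.dist_eq] at hx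
  have h1 := abs_lt.1 hx
  rw [abs_lt]
  constructor <;> [nlinarith [hk.1, hk.2]; nlinarith [hk.1, hk.2] ]

lemma hasDerivAt_ellE {k : ℝ} (hk : k ∈ Ioo (0:ℝ) 1) :
    HasDerivAt ellE ((ellE k - ellK k) / k) k := by
  obtain ⟨hk0, hk1⟩ := hk
  have hk2 : k ^ 2 < 1 := by nlinarith
  set r : ℝ := (1 + k) / 2 with hr
  have hr1 : r < 1 := by rw [hr]; linarith
  have hr0 : 0 < r := by rw [hr]; linarith
  have hr2 : r ^ 2 < 1 := by nlinarith
  have heps : (0:ℝ) < (1 - k) / 2 := by linarith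
  have main := intervalIntegral.hasDerivAt_integral_of_dominated_loc_of_deriv_le
    (F := fun x t => Real.sqrt (1 - x ^ 2 * t ^ 2) / Real.sqrt (1 - t ^ 2))
    (F' := fun x t => -(x * t ^ 2) * AK x t)
    (bound := fun t => (Real.sqrt (1 - r ^ 2))⁻¹ * r * (1 - t) ^ (-(1/2) : ℝ))
    (μ := volume) (a := 0) (b := 1) (x₀ := k) (Metric.ball_mem_nhds k heps)
    (Filter.Eventually.of_forall (fun x => (measBE x).aestronglyMeasurable))
    (BE_integrable hk2)
    (by
      apply Measurable.aestronglyMeasurable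
      exact (measurable_const.mul m_sq).neg.mul (measAK k))
    ?_ (base_integrable.const_mul _) ?_
  · -- conclusion
    have h2 := main.2
    have heq : (∫ t in (0:ℝ)..1, -(k * t ^ 2) * AK k t) = (ellE k - ellK k) / k := by
      have hpt : ∀ᵐ t : ℝ, t ∈ Ι (0:ℝ) 1 → -(k * t ^ 2) * AK k t = (BE k t - AK k t) / k := by
        filter_upwards [ae_ne_one] with t hne htm
        rw [uIoc01] at htm
        have ht : t ∈ Ioo (0:ℝ) 1 := ⟨htm.1, lt_of_le_of_ne htm.2 hne⟩
        have ha0 := (ha_pos ht).ne'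
        have hb0 := (hb_pos hk2 ht).ne'
        have hb2 : Real.sqrt (1 - k ^ 2 * t ^ 2) ^ 2 = 1 - k ^ 2 * t ^ 2 :=
          Real.sq_sqrt (kt_pos hk2 ht).le
        unfold AK BE
        field_simp
        linear_combination -hb2
      rw [intervalIntegral.integral_congr_ae hpt, intervalIntegral.integral_div,
        intervalIntegral.integral_sub (BE_integrable hk2) (AK_integrable hk2)]
      rw [← ellE_eq, ← ellK_eq]
    rw [heq] at h2
    exact h2
  · -- h_bound
    filter_upwards [ae_ne_one] with t hne htm x hx
    rw [uIoc01] at htm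
    have ht : t ∈ Ioo (0:ℝ) 1 := ⟨htm.1, lt_of_le_of_ne htm.2 hne⟩
    have hxr := ball_abs ⟨hk0, hk1⟩ hx
    have hx2 : x ^ 2 < r ^ 2 := by nlinarith [abs_nonneg x, sq_abs x]
    have hx1 : x ^ 2 < 1 := lt_trans hx2 hr2
    have h1t : (0:ℝ) < 1 - t := by linarith [ht.2]
    have hrr : 0 < Real.sqrt (1 - r ^ 2) := Real.sqrt_pos.2 (by nlinarith)
    have hbx : Real.sqrt (1 - r ^ 2) ≤ Real.sqrt (1 - x ^ 2 * t ^ 2) :=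
      Real.sqrt_le_sqrt (by nlinarith [t2lt1 ht, sq_nonneg x])
    have hAK : 0 ≤ AK x t := by unfold AK; positivity
    rw [Real.norm_eq_abs, rpow_neg_half_eq h1t.le, abs_mul, abs_neg, abs_mul,
      abs_of_nonneg (sq_nonneg t), abs_of_nonneg hAK]
    have key : AK x t ≤ 1 / (Real.sqrt (1 - t) * Real.sqrt (1 - r ^ 2)) := by
      apply div_le_div₀ zero_le_one le_rfl (mul_pos (hp1 ht) hrr)
      exact mul_le_mul (hs1 ht) hbx hrr.le (ha_pos ht).le
    calc |x| * t ^ 2 * AK x t ≤ r * 1 * (1 / (Real.sqrt (1 - t) * Real.sqrt (1 - r ^ 2))) := by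
          apply mul_le_mul _ key hAK (by positivity)
          have := t2lt1 ht
          nlinarith [abs_nonneg x, sq_nonneg t]
      _ = (Real.sqrt (1 - r ^ 2))⁻¹ * r * (Real.sqrt (1 - t))⁻¹ := by
          rw [one_div, mul_inv]; ring
  · -- h_diff
    filter_upwards [ae_ne_one] with t hne htm x hx
    rw [uIoc01] at htm
    have ht : t ∈ Ioo (0:ℝ) 1 := ⟨htm.1, lt_of_le_of_ne htm.2 hne⟩
    have hxr := ball_abs ⟨hk0, hk1⟩ hx
    have hx2 : x ^ 2 < r ^ 2 := by nlinarith [abs_nonneg x, sq_abs x]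
    have hx1 : x ^ 2 < 1 := lt_trans hx2 hr2
    have hpos : (0:ℝ) < 1 - x ^ 2 * t ^ 2 := by nlinarith [t2lt1 ht, sq_nonneg x]
    have hin : HasDerivAt (fun y : ℝ => 1 - y ^ 2 * t ^ 2) (-(2 * x * t ^ 2)) x := by
      have := ((hasDerivAt_pow 2 x).mul_const (t ^ 2)).const_sub 1
      simpa [mul_comm, mul_assoc] using this
    have hs := hin.sqrt hpos.ne'
    have hd := hs.div_const (Real.sqrt (1 - t ^ 2))
    refine hd.congr_deriv (Eq.symm ?_)
    have hbx : 0 < Real.sqrt (1 - x ^ 2 * t ^ 2) := Real.sqrt_pos.2 hpos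
    have ha0 := ha_pos ht
    unfold AK
    field_simp

lemma hasDerivAt_ellK {k : ℝ} (hk : k ∈ Ioo (0:ℝ) 1) :
    HasDerivAt ellK ((ellE k - (1 - k ^ 2) * ellK k) / (k * (1 - k ^ 2))) k := by
  obtain ⟨hk0, hk1⟩ := hk
  have hk2 : k ^ 2 < 1 := by nlinarith
  set r : ℝ := (1 + k) / 2 with hr
  have hr1 : r < 1 := by rw [hr]; linarith
  have hr0 : 0 < r := by rw [hr]; linarith
  have hr2 : r ^ 2 < 1 := by nlinarith
  have heps : (0:ℝ) < (1 - k) / 2 := by linarith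
  have main := intervalIntegral.hasDerivAt_integral_of_dominated_loc_of_deriv_le
    (F := fun x t => 1 / (Real.sqrt (1 - t ^ 2) * Real.sqrt (1 - x ^ 2 * t ^ 2)))
    (F' := fun x t => x * t ^ 2 /
      (Real.sqrt (1 - t ^ 2) * ((1 - x ^ 2 * t ^ 2) * Real.sqrt (1 - x ^ 2 * t ^ 2))))
    (bound := fun t => ((1 - r ^ 2) * Real.sqrt (1 - r ^ 2))⁻¹ * r * (1 - t) ^ (-(1/2) : ℝ))
    (μ := volume) (a := 0) (b := 1) (x₀ := k) (Metric.ball_mem_nhds k heps)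
    (Filter.Eventually.of_forall (fun x => by
      apply Measurable.aestronglyMeasurable
      exact measurable_const.div (m_a.mul ((measurable_const.sub (m_sq.const_mul _)).sqrt))))
    (by
      have h := AK_integrable hk2
      have : AK k = fun t => 1 / (Real.sqrt (1 - t ^ 2) * Real.sqrt (1 - k ^ 2 * t ^ 2)) := rfl
      rw [this] at h
      exact h)
    (by
      apply Measurable.aestronglyMeasurable
      exact (m_sq.const_mul k).div
        (m_a.mul ((measurable_const.sub (m_sq.const_mul _)).mul
          ((measurable_const.sub (m_sq.const_mul _)).sqrt))))
    ?_ (base_integrable.const_mul _) ?_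
  · -- conclusion
    have h2 := main.2
    have heq : (∫ t in (0:ℝ)..1, k * t ^ 2 /
        (Real.sqrt (1 - t ^ 2) * ((1 - k ^ 2 * t ^ 2) * Real.sqrt (1 - k ^ 2 * t ^ 2)))) =
        (ellE k - (1 - k ^ 2) * ellK k) / (k * (1 - k ^ 2)) := by
      have h1 : (fun t : ℝ => k * t ^ 2 /
          (Real.sqrt (1 - t ^ 2) * ((1 - k ^ 2 * t ^ 2) * Real.sqrt (1 - k ^ 2 * t ^ 2)))) =
          fun t => k * W k t := by
        funext t; unfold W; ring
      rw [h1, intervalIntegral.integral_const_mul]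
      have h2' := intW_val hk2
      have h3 := ellE_sub_ellK hk2
      have hne1 : (1:ℝ) - k ^ 2 ≠ 0 := by nlinarith
      have hne0 : k ≠ 0 := hk0.ne'
      rw [eq_div_iff (by positivity)]
      linear_combination k ^ 2 * h2' - h3
    rw [heq] at h2
    exact h2
  · -- h_bound
    filter_upwards [ae_ne_one] with t hne htm x hx
    rw [uIoc01] at htm
    have ht : t ∈ Ioo (0:ℝ) 1 := ⟨htm.1, lt_of_le_of_ne htm.2 hne⟩
    have hxr := ball_abs ⟨hk0, hk1⟩ hx
    have hx2 : x ^ 2 < r ^ 2 := by nlinarith [abs_nonneg x, sq_abs x]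
    have hx1 : x ^ 2 < 1 := lt_trans hx2 hr2
    have h1t : (0:ℝ) < 1 - t := by linarith [ht.2]
    have hpos : (0:ℝ) < 1 - x ^ 2 * t ^ 2 := by nlinarith [t2lt1 ht, sq_nonneg x]
    have hrpos : (0:ℝ) < 1 - r ^ 2 := by nlinarith
    have hrr : 0 < Real.sqrt (1 - r ^ 2) := Real.sqrt_pos.2 hrpos
    have hbx : Real.sqrt (1 - r ^ 2) ≤ Real.sqrt (1 - x ^ 2 * t ^ 2) :=
      Real.sqrt_le_sqrt (by nlinarith [t2lt1 ht, sq_nonneg x])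
    have hDpos : 0 < Real.sqrt (1 - t ^ 2) * ((1 - x ^ 2 * t ^ 2) * Real.sqrt (1 - x ^ 2 * t ^ 2)) :=
      mul_pos (ha_pos ht) (mul_pos hpos (Real.sqrt_pos.2 hpos))
    rw [Real.norm_eq_abs, rpow_neg_half_eq h1t.le, abs_div, abs_of_pos hDpos, abs_mul,
      abs_of_nonneg (sq_nonneg t)]
    have hd : Real.sqrt (1 - t) * ((1 - r ^ 2) * Real.sqrt (1 - r ^ 2)) ≤
        Real.sqrt (1 - t ^ 2) * ((1 - x ^ 2 * t ^ 2) * Real.sqrt (1 - x ^ 2 * t ^ 2)) := by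
      apply mul_le_mul (hs1 ht) _ (mul_nonneg hrpos.le hrr.le) (ha_pos ht).le
      apply mul_le_mul (by nlinarith [t2lt1 ht, sq_nonneg x]) hbx hrr.le hpos.le
    calc |x| * t ^ 2 / (Real.sqrt (1 - t ^ 2) * ((1 - x ^ 2 * t ^ 2) * Real.sqrt (1 - x ^ 2 * t ^ 2)))
        ≤ r * 1 / (Real.sqrt (1 - t) * ((1 - r ^ 2) * Real.sqrt (1 - r ^ 2))) := by
          apply div_le_div₀ (by positivity) _ (mul_pos (hp1 ht) (mul_pos hrpos hrr)) hd
          nlinarith [abs_nonneg x, t2lt1 ht, sq_nonneg t]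
      _ = ((1 - r ^ 2) * Real.sqrt (1 - r ^ 2))⁻¹ * r * (Real.sqrt (1 - t))⁻¹ := by
          rw [mul_one, div_eq_mul_inv, mul_inv]; ring
  · -- h_diff
    filter_upwards [ae_ne_one] with t hne htm x hx
    rw [uIoc01] at htm
    have ht : t ∈ Ioo (0:ℝ) 1 := ⟨htm.1, lt_of_le_of_ne htm.2 hne⟩
    have hxr := ball_abs ⟨hk0, hk1⟩ hx
    have hx2 : x ^ 2 < r ^ 2 := by nlinarith [abs_nonneg x, sq_abs x]
    have hpos : (0:ℝ) < 1 - x ^ 2 * t ^ 2 := by nlinarith [t2lt1 ht, sq_nonneg x, hr2]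
    have hbx : 0 < Real.sqrt (1 - x ^ 2 * t ^ 2) := Real.sqrt_pos.2 hpos
    have ha0 := ha_pos ht
    have hin : HasDerivAt (fun y : ℝ => 1 - y ^ 2 * t ^ 2) (-(2 * x * t ^ 2)) x := by
      have := ((hasDerivAt_pow 2 x).mul_const (t ^ 2)).const_sub 1
      simpa [mul_comm, mul_assoc] using this
    have hs := hin.sqrt hpos.ne'
    have hm := hs.const_mul (Real.sqrt (1 - t ^ 2))
    have hinv := hm.inv (by positivity)
    have hfe : (fun y : ℝ => 1 / (Real.sqrt (1 - t ^ 2) * Real.sqrt (1 - y ^ 2 * t ^ 2))) =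
        fun y => (Real.sqrt (1 - t ^ 2) * Real.sqrt (1 - y ^ 2 * t ^ 2))⁻¹ := by
      funext y; rw [one_div]
    rw [hfe]
    refine hinv.congr_deriv (Eq.symm ?_)
    have hbx2 : Real.sqrt (1 - x ^ 2 * t ^ 2) ^ 2 = 1 - x ^ 2 * t ^ 2 := Real.sq_sqrt hpos.le
    field_simp
    linear_combination x * t ^ 2 * hbx2

lemma EK_lt {k : ℝ} (hk : k ∈ Ioo (0:ℝ) 1) : (1 - k ^ 2) * ellK k < ellE k := by
  have hk2 : k ^ 2 < 1 := by nlinarith [hk.1, hk.2]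
  have h := ellE_sub_ellK hk2
  have h2 : 0 < k ^ 2 * ∫ t in (0:ℝ)..1, CC k t :=
    mul_pos (pow_pos hk.1 2) (intCC_pos hk2)
  linarith

lemma D_pos {k : ℝ} (hk : k ∈ Ioo (0:ℝ) 1) : 0 < ellE k - (1 - k ^ 2) / 2 * ellK k := by
  have hk2 : k ^ 2 < 1 := by nlinarith [hk.1, hk.2]
  have h1 := ellK_pos hk2
  have h2 := EK_lt hk
  nlinarith

noncomputable def gg (k : ℝ) : ℝ :=
  (1 + k ^ 2) * (ellE k - (1 - k ^ 2) * (1 + 3 * k ^ 2) / (4 * (1 + k ^ 2)) * ellK k) /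
    (12 * (ellE k - (1 - k ^ 2) / 2 * ellK k) ^ 3)

set_option maxHeartbeats 2000000 in
lemma gg_hasDeriv {k : ℝ} (hk : k ∈ Ioo (0:ℝ) 1) :
    HasDerivAt gg ((1 - k ^ 2) * ellE k * ((1 - k ^ 2) * ellK k - ellE k) /
      (16 * k * (ellE k - (1 - k ^ 2) / 2 * ellK k) ^ 4)) k := by
  obtain ⟨hk0, hk1⟩ := hk
  have hk2 : k ^ 2 < 1 := by nlinarith
  have hDpos := D_pos ⟨hk0, hk1⟩
  have hE := hasDerivAt_ellE ⟨hk0, hk1⟩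
  have hK := hasDerivAt_ellK ⟨hk0, hk1⟩
  have hsq := hasDerivAt_pow 2 k
  have hu : HasDerivAt (fun x : ℝ => (1 - x ^ 2) * (1 + 3 * x ^ 2))
      (-(2 * k ^ 1) * (1 + 3 * k ^ 2) + (1 - k ^ 2) * (3 * (2 * k ^ 1))) k :=
    (hsq.const_sub 1).mul ((hsq.const_mul 3).const_add 1)
  have hv : HasDerivAt (fun x : ℝ => 4 * (1 + x ^ 2)) (4 * (2 * k ^ 1)) k :=
    (hsq.const_add 1).const_mul 4
  have hp := hu.div hv (by positivity)
  have hN := hE.sub (hp.mul hK)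
  have h1 : HasDerivAt (fun x : ℝ => 1 + x ^ 2) (2 * k ^ 1) k := hsq.const_add 1
  have hq := h1.mul hN
  have hhalf : HasDerivAt (fun x : ℝ => (1 - x ^ 2) / 2) (-(2 * k ^ 1) / 2) k :=
    (hsq.const_sub 1).div_const 2
  have hD := hE.sub (hhalf.mul hK)
  have hcube := (hD.pow 3).const_mul 12
  have hg := hq.div hcube (mul_ne_zero (by norm_num) (pow_ne_zero 3 hDpos.ne'))
  refine hg.congr_deriv (Eq.symm ?_)
  have hne1 : (1:ℝ) - k ^ 2 ≠ 0 := by nlinarith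
  have hne2 : (1:ℝ) + k ^ 2 ≠ 0 := by positivity
  have hne3 : k ≠ 0 := hk0.ne'
  have hne4 : ellE k - (1 - k ^ 2) / 2 * ellK k ≠ 0 := hDpos.ne'
  simp only [Pi.mul_apply, Pi.sub_apply, Pi.div_apply, Pi.pow_apply]
  rw [div_eq_div_iff
    (mul_ne_zero (mul_ne_zero (by norm_num) hne3) (pow_ne_zero _ hne4))
    (pow_ne_zero 2 (mul_ne_zero (by norm_num) (pow_ne_zero 3 hne4)))]
  field_simp
  ring

lemma f_eq_gg {k : ℝ} (hk : k ∈ Ioo (0:ℝ) 1) : I₁ k / I₂ k ^ 3 = gg k := by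
  have hDpos := D_pos hk
  have hpos : (0:ℝ) < 2 / (1 + k ^ 2) := by positivity
  have hs0 : 0 < Real.sqrt (2 / (1 + k ^ 2)) := Real.sqrt_pos.2 hpos
  have hs2 : Real.sqrt (2 / (1 + k ^ 2)) ^ 2 = 2 / (1 + k ^ 2) := Real.sq_sqrt hpos.le
  have hne2 : (1:ℝ) + k ^ 2 ≠ 0 := by positivity
  unfold I₁ I₂ gg
  rw [mul_pow, mul_pow]
  have hd1 : (2:ℝ) ^ 3 * Real.sqrt (2 / (1 + k ^ 2)) ^ 3 *
      (ellE k - (1 - k ^ 2) / 2 * ellK k) ^ 3 ≠ 0 :=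
    mul_ne_zero (mul_ne_zero (by norm_num) (pow_ne_zero _ hs0.ne')) (pow_ne_zero _ hDpos.ne')
  have hd2 : (12:ℝ) * (ellE k - (1 - k ^ 2) / 2 * ellK k) ^ 3 ≠ 0 :=
    mul_ne_zero (by norm_num) (pow_ne_zero _ hDpos.ne')
  rw [div_eq_div_iff hd1 hd2]
  have h3 : Real.sqrt (2 / (1 + k ^ 2)) ^ 3 =
      (2 / (1 + k ^ 2)) * Real.sqrt (2 / (1 + k ^ 2)) := by
    rw [pow_succ, hs2]
  rw [h3]
  field_simp
  ring

lemma gg_strictAnti : StrictAntiOn gg (Ioo (0 : ℝ) 1) := by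
  apply strictAntiOn_of_deriv_neg (convex_Ioo 0 1)
  · intro x hx
    exact (gg_hasDeriv hx).continuousAt.continuousWithinAt
  · intro x hx
    rw [interior_Ioo] at hx
    rw [(gg_hasDeriv hx).deriv]
    obtain ⟨hx0, hx1⟩ := hx
    have hk2 : x ^ 2 < 1 := by nlinarith
    have hE := ellE_pos hk2
    have hEK := EK_lt ⟨hx0, hx1⟩
    have hD := D_pos ⟨hx0, hx1⟩
    apply div_neg_of_neg_of_pos
    · apply mul_neg_of_pos_of_neg (mul_pos (by nlinarith) hE)
      linarith
    · positivity


/-- `k ↦ I₁(k)/I₂(k)³` is strictly decreasing on `(0,1)`. -/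
theorem I1_div_I2_cubed_strictAnti :
    StrictAntiOn (fun k => I₁ k / I₂ k ^ 3) (Ioo (0 : ℝ) 1) := by
  intro a ha b hb hab
  simp only []
  rw [f_eq_gg ha, f_eq_gg hb]
  exact gg_strictAnti ha hb hab
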